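/- arXiv:2405.16679 — 3 statements merged into one kernel-verified Lean document; each statement's English description precedes it below -/
import Mathlib

section
/- Let d ≥ 1 be an integer, let k > 0, let m satisfy d/(d+k) < m < 1, and set α = 2 − km/(d(1−m)). Then there exists a constant C > 0 such that for every nonnegative measurable function f ∈ L¹(ℝ^d), not almost everywhere zero, with ∫_{ℝ^d} f(x)^m dx < ∞, the reversed Hardy–Littlewood–Sobolev inequality holds: ∬_{ℝ^d×ℝ^d} f(x)|x−y|^k f(y) dx dy ≥ C (∫_{ℝ^d} f(x) dx)^α (∫_{ℝ^d} f(x)^m dx)^{(2−α)/m}. -/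
open MeasureTheory Real Set
open scoped ENNReal NNReal

noncomputable section

namespace ReversedHLSAux

lemma psi_le {k q s : ℝ} (hk : 0 < k) (hq : 0 ≤ q) (hs : 0 ≤ s) :
    (1 + s ^ k) ^ (-q) ≤ 2 ^ (k * q) * (1 + s) ^ (-(k * q)) := by
  have h1 : (0:ℝ) < 1 + s ^ k := by positivity
  have h2 : (0:ℝ) < 1 + s := by positivity
  have h2k : (0:ℝ) < 2 ^ k := Real.rpow_pos_of_pos (by norm_num) k
  have hsk : (0:ℝ) ≤ s ^ k := Real.rpow_nonneg hs k
  have key : (1 + s) ^ k ≤ 2 ^ k * (1 + s ^ k) := by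
    rcases le_total s 1 with h | h
    · have : (1 + s) ^ k ≤ 2 ^ k :=
        Real.rpow_le_rpow (by positivity) (by linarith) hk.le
      nlinarith
    · have h' : (1 + s) ^ k ≤ (2 * s) ^ k :=
        Real.rpow_le_rpow (by positivity) (by linarith) hk.le
      have h'' : (2 * s) ^ k = 2 ^ k * s ^ k := Real.mul_rpow (by norm_num) (by linarith)
      nlinarith
  have key2 : (1 + s) ^ (k * q) ≤ 2 ^ (k * q) * (1 + s ^ k) ^ q := by
    rw [Real.rpow_mul h2.le, Real.rpow_mul (by norm_num : (0:ℝ) ≤ 2),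
      ← Real.mul_rpow (by positivity) h1.le]
    exact Real.rpow_le_rpow (by positivity) key hq
  have hb : (0:ℝ) < (1 + s ^ k) ^ q := Real.rpow_pos_of_pos h1 q
  have ha : (0:ℝ) < (1 + s) ^ (k * q) := Real.rpow_pos_of_pos h2 _
  calc (1 + s ^ k) ^ (-q) = 1 / ((1 + s ^ k) ^ q) := by
        rw [Real.rpow_neg h1.le, one_div]
    _ ≤ 2 ^ (k * q) / ((1 + s) ^ (k * q)) := by
        rw [div_le_div_iff₀ hb ha]; nlinarith
    _ = 2 ^ (k * q) * (1 + s) ^ (-(k * q)) := by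
        rw [Real.rpow_neg h2.le, div_eq_mul_inv]

lemma psi_cont {k q : ℝ} (hk : 0 < k) {E : Type*} [NormedAddCommGroup E] :
    Continuous fun z : E => (1 + ‖z‖ ^ k) ^ (-q) := by
  have h1 : Continuous fun z : E => 1 + ‖z‖ ^ k :=
    continuous_const.add (continuous_norm.rpow_const (fun z => Or.inr hk.le))
  exact h1.rpow_const (fun z => Or.inl (by positivity))

lemma psi_integrable (d : ℕ) {k q : ℝ} (hk : 0 < k) (hq : 0 < q)
    (hdq : (d : ℝ) < k * q) :
    Integrable (fun z : EuclideanSpace ℝ (Fin d) => (1 + ‖z‖ ^ k) ^ (-q)) := by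
  have h0 : Integrable (fun z : EuclideanSpace ℝ (Fin d) => (1 + ‖z‖) ^ (-(k * q))) := by
    apply integrable_one_add_norm
    rwa [finrank_euclideanSpace_fin]
  refine (h0.const_mul ((2:ℝ) ^ (k * q))).mono'
    ((psi_cont hk).aestronglyMeasurable) ?_
  filter_upwards with z
  rw [Real.norm_eq_abs, abs_of_nonneg (Real.rpow_nonneg (by positivity) _)]
  exact psi_le hk hq.le (norm_nonneg z)

lemma phi_integral {d : ℕ} {k q ρ : ℝ} (hρ : 0 < ρ) (x : EuclideanSpace ℝ (Fin d))
    (hψ : Integrable (fun z : EuclideanSpace ℝ (Fin d) => (1 + ‖z‖ ^ k) ^ (-q))) :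
    Integrable (fun y : EuclideanSpace ℝ (Fin d) => (1 + (‖y - x‖ / ρ) ^ k) ^ (-q)) ∧
    ∫ y : EuclideanSpace ℝ (Fin d), (1 + (‖y - x‖ / ρ) ^ k) ^ (-q)
      = ρ ^ d * ∫ z : EuclideanSpace ℝ (Fin d), (1 + ‖z‖ ^ k) ^ (-q) := by
  set ψ : EuclideanSpace ℝ (Fin d) → ℝ := fun z => (1 + ‖z‖ ^ k) ^ (-q) with hψdef
  have hfun : (fun y : EuclideanSpace ℝ (Fin d) => (1 + (‖y - x‖ / ρ) ^ k) ^ (-q))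
      = fun y => (fun z => ψ (ρ⁻¹ • z)) (y - x) := by
    funext y
    simp only [hψdef, norm_smul, norm_inv, Real.norm_eq_abs, abs_of_pos hρ]
    rw [inv_mul_eq_div]
  constructor
  · rw [hfun]
    exact (hψ.comp_smul (inv_ne_zero hρ.ne')).comp_sub_right x
  · rw [hfun, integral_sub_right_eq_self (fun z => ψ (ρ⁻¹ • z)) x,
      Measure.integral_comp_smul volume ψ ρ⁻¹, finrank_euclideanSpace_fin,
      inv_pow, inv_inv, abs_of_pos (pow_pos hρ d), smul_eq_mul]

end ReversedHLSAux

open ReversedHLSAux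

set_option maxHeartbeats 2000000 in
/-- Reversed Hardy–Littlewood–Sobolev inequality: for `d ≥ 1`,
`k > 0`, `d/(d+k) < m < 1` and `α = 2 − km/(d(1−m))`, there is a constant
`C > 0` such that for every nonnegative measurable `f ∈ L¹(ℝ^d)`, not a.e.
zero, with `∫ f^m < ∞`,
`∬ f(x)|x−y|^k f(y) dx dy ≥ C (∫ f)^α (∫ f^m)^{(2−α)/m}`.
The double integral of the nonnegative integrand is taken in the extended
nonnegative reals (if it is infinite the inequality holds trivially). -/
theorem reversed_hls (d : ℕ) (hd : 1 ≤ d) (k : ℝ) (hk : 0 < k)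
    (m : ℝ) (hm_lb : (d : ℝ) / (d + k) < m) (hm_ub : m < 1)
    (α : ℝ) (hα : α = 2 - k * m / (d * (1 - m))) :
    ∃ C : ℝ, 0 < C ∧
      ∀ f : EuclideanSpace ℝ (Fin d) → ℝ, Measurable f → (∀ x, 0 ≤ f x) →
        Integrable f → ¬ (f =ᵐ[volume] 0) → Integrable (fun x => f x ^ m) →
        ENNReal.ofReal
            (C * (∫ x, f x) ^ α * (∫ x, f x ^ m) ^ ((2 - α) / m))
          ≤ ∫⁻ x, ∫⁻ y, ENNReal.ofReal (f x * ‖x - y‖ ^ k * f y) := by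
  have hd0 : (0:ℝ) < d := by exact_mod_cast hd
  have hdk : (0:ℝ) < d + k := by linarith
  have hm0 : 0 < m := lt_trans (div_pos hd0 hdk) hm_lb
  have h1m : 0 < 1 - m := by linarith
  set q : ℝ := m / (1 - m) with hqdef
  have hq : 0 < q := div_pos hm0 h1m
  have hdq : (d : ℝ) < k * q := by
    have h := (div_lt_iff₀ hdk).mp hm_lb
    rw [show q = m / (1 - m) from rfl, ← mul_div_assoc, lt_div_iff₀ h1m]
    nlinarith
  set β : ℝ := k / (d * (1 - m)) with hβdef
  have hβ : 0 < β := div_pos hk (by positivity)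
  have hαβ : α = 2 - m * β := by rw [hα, hβdef]; field_simp
  have hβα : (2 - α) / m = β := by rw [hαβ]; field_simp; ring
  -- the constant K
  set K : ℝ := ∫ z : EuclideanSpace ℝ (Fin d), (1 + ‖z‖ ^ k) ^ (-q) with hKdef
  have hψint : Integrable (fun z : EuclideanSpace ℝ (Fin d) => (1 + ‖z‖ ^ k) ^ (-q)) :=
    psi_integrable d hk hq hdq
  have hK : 0 < K := by
    rw [hKdef, (integral_pos_iff_support_of_nonneg_ae
      (Filter.Eventually.of_forall fun z => Real.rpow_nonneg (by positivity) _) hψint)]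
    have : Function.support (fun z : EuclideanSpace ℝ (Fin d) => (1 + ‖z‖ ^ k) ^ (-q))
        = Set.univ := by
      ext z; simp only [Function.mem_support, Set.mem_univ, iff_true]
      exact (Real.rpow_pos_of_pos (by positivity) _).ne'
    rw [this]
    exact isOpen_univ.measure_pos volume ⟨0, trivial⟩
  refine ⟨2 ^ (-(m * β)) * K ^ (-((1 - m) * β)), by positivity, ?_⟩
  set C : ℝ := 2 ^ (-(m * β)) * K ^ (-((1 - m) * β)) with hCdef
  have hC : 0 < C := by positivity
  intro f hfm hnn hint hne hintm
  set A : ℝ := ∫ x, f x with hAdef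
  set B : ℝ := ∫ x, f x ^ m with hBdef
  have hA : 0 < A := by
    rcases (integral_nonneg (f := f) hnn).lt_or_eq with h | h
    · exact h
    · exact absurd ((integral_eq_zero_iff_of_nonneg hnn hint).mp h.symm) hne
  have hBnn : ∀ x, 0 ≤ f x ^ m := fun x => Real.rpow_nonneg (hnn x) m
  have hB : 0 < B := by
    rcases (integral_nonneg (f := fun x => f x ^ m) hBnn).lt_or_eq with h | h
    · exact h
    · exfalso
      apply hne
      have := (integral_eq_zero_iff_of_nonneg hBnn hintm).mp h.symm
      filter_upwards [this] with x hx
      simpa using (Real.rpow_eq_zero (hnn x) hm0.ne').mp hx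
  set X : ℝ := B / ((2 * A) ^ m * K ^ (1 - m)) with hXdef
  have hX : 0 < X := by
    apply div_pos hB
    positivity
  set ρ : ℝ := X ^ (1 / ((d:ℝ) * (1 - m))) with hρdef
  have hρ : 0 < ρ := Real.rpow_pos_of_pos hX _
  have hρk : 0 < ρ ^ k := Real.rpow_pos_of_pos hρ k
  -- the key pointwise lower bound
  have key : ∀ x : EuclideanSpace ℝ (Fin d),
      ENNReal.ofReal (A * ρ ^ k) ≤ ∫⁻ y, ENNReal.ofReal (‖x - y‖ ^ k * f y) := by
    intro x
    set T : ℝ≥0∞ := ∫⁻ y, ENNReal.ofReal (‖x - y‖ ^ k * f y) with hTdef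
    rcases eq_or_ne T ⊤ with hT | hT
    · rw [hT]; exact le_top
    set φ : EuclideanSpace ℝ (Fin d) → ℝ := fun y => 1 + (‖y - x‖ / ρ) ^ k with hφdef
    have hφ1 : ∀ y, 1 ≤ φ y := fun y => by
      have : (0:ℝ) ≤ (‖y - x‖ / ρ) ^ k := Real.rpow_nonneg (by positivity) k
      simp only [hφdef]; linarith
    have hφpos : ∀ y, 0 < φ y := fun y => lt_of_lt_of_le one_pos (hφ1 y)
    have hφcont : Continuous φ := by
      apply continuous_const.add
      exact ((continuous_id.sub continuous_const).norm.div_const ρ).rpow_const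
        (fun y => Or.inr hk.le)
    have hφmeas : Measurable φ := hφcont.measurable
    -- Hölder
    set F : EuclideanSpace ℝ (Fin d) → ℝ≥0∞ :=
      fun y => ENNReal.ofReal (f y * φ y) ^ m with hFdef
    set G : EuclideanSpace ℝ (Fin d) → ℝ≥0∞ :=
      fun y => ENNReal.ofReal (φ y) ^ (-m) with hGdef
    have hφne0 : ∀ y, ENNReal.ofReal (φ y) ≠ 0 := fun y =>
      (ENNReal.ofReal_pos.mpr (hφpos y)).ne'
    have hFG : ∀ y, F y * G y = ENNReal.ofReal (f y ^ m) := by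
      intro y
      rw [hFdef, hGdef]
      simp only
      rw [ENNReal.ofReal_mul (hnn y), ENNReal.mul_rpow_of_nonneg _ _ hm0.le,
        mul_assoc, ← ENNReal.rpow_add m (-m) (hφne0 y) ENNReal.ofReal_ne_top,
        add_neg_cancel, ENNReal.rpow_zero, mul_one,
        ENNReal.ofReal_rpow_of_nonneg (hnn y) hm0.le]
    have hp : Real.HolderConjugate (1 / m) (1 / (1 - m)) := by
      rw [Real.holderConjugate_iff]
      constructor
      · rw [lt_div_iff₀ hm0]; linarith
      · simp only [one_div, inv_inv]; ring
    have hFmeas : AEMeasurable F volume :=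
      (((hfm.mul hφmeas).ennreal_ofReal).pow_const m).aemeasurable
    have hGmeas : AEMeasurable G volume :=
      ((hφmeas.ennreal_ofReal).pow_const (-m)).aemeasurable
    have happ := ENNReal.lintegral_mul_le_Lp_mul_Lq volume hp hFmeas hGmeas
    -- rewrite the three integrals
    have hL : ∫⁻ y, (F * G) y = ENNReal.ofReal B := by
      rw [show (∫⁻ y, (F * G) y) = ∫⁻ y, ENNReal.ofReal (f y ^ m) from
        lintegral_congr fun y => hFG y]
      rw [← ofReal_integral_eq_lintegral_ofReal hintm
        (Filter.Eventually.of_forall hBnn), hBdef]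
    have hF1 : ∀ y, F y ^ (1 / m) = ENNReal.ofReal (f y * φ y) := by
      intro y
      rw [hFdef]
      simp only
      rw [← ENNReal.rpow_mul, mul_one_div_cancel hm0.ne', ENNReal.rpow_one]
    have hsplit : ∀ y, ENNReal.ofReal (f y * φ y)
        = ENNReal.ofReal (f y) + ENNReal.ofReal ((ρ ^ k)⁻¹) * ENNReal.ofReal (‖x - y‖ ^ k * f y) := by
      intro y
      rw [← ENNReal.ofReal_mul (by positivity), ← ENNReal.ofReal_add (hnn y)
        (mul_nonneg (by positivity) (mul_nonneg (by positivity) (hnn y)))]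
      congr 1
      have hdiv : (‖y - x‖ / ρ) ^ k = ‖x - y‖ ^ k * (ρ ^ k)⁻¹ := by
        rw [Real.div_rpow (norm_nonneg _) hρ.le, norm_sub_rev, div_eq_mul_inv]
      rw [hφdef]
      simp only
      rw [hdiv]; ring
    have hTmeas : Measurable fun y : EuclideanSpace ℝ (Fin d) =>
        ENNReal.ofReal (‖x - y‖ ^ k * f y) :=
      (((measurable_const.sub measurable_id).norm.pow_const k).mul hfm).ennreal_ofReal
    have hF2 : ∫⁻ y, F y ^ (1 / m)
        = ENNReal.ofReal A + ENNReal.ofReal ((ρ ^ k)⁻¹) * T := by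
      rw [lintegral_congr (fun y => (hF1 y).trans (hsplit y)),
        lintegral_add_left hfm.ennreal_ofReal,
        lintegral_const_mul' _ _ ENNReal.ofReal_ne_top,
        ← ofReal_integral_eq_lintegral_ofReal hint (Filter.Eventually.of_forall hnn),
        hAdef, hTdef]
    have hφint := (phi_integral hρ x hψint).1
    have hφval := (phi_integral hρ x hψint).2
    have hG1 : ∀ y, G y ^ (1 / (1 - m)) = ENNReal.ofReal (φ y ^ (-q)) := by
      intro y
      rw [hGdef]
      simp only
      rw [← ENNReal.rpow_mul, ENNReal.ofReal_rpow_of_pos (hφpos y)]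
      congr 1
      rw [hqdef]; field_simp
    have hG2 : ∫⁻ y, G y ^ (1 / (1 - m)) = ENNReal.ofReal (ρ ^ d * K) := by
      rw [lintegral_congr hG1,
        ← ofReal_integral_eq_lintegral_ofReal hφint (Filter.Eventually.of_forall
          (fun y => Real.rpow_nonneg (hφpos y).le _)), hφval, hKdef]
    rw [hL, hF2, hG2, one_div_one_div, one_div_one_div] at happ
    -- convert to reals
    set t : ℝ := T.toReal with htdef
    have ht0 : 0 ≤ t := ENNReal.toReal_nonneg
    have hTt : T = ENNReal.ofReal t := (ENNReal.ofReal_toReal hT).symm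
    rw [hTt, ← ENNReal.ofReal_mul (by positivity),
      ← ENNReal.ofReal_add hA.le (by positivity),
      ENNReal.ofReal_rpow_of_nonneg (by positivity) hm0.le,
      ENNReal.ofReal_rpow_of_nonneg (by positivity) h1m.le,
      ← ENNReal.ofReal_mul (by positivity)] at happ
    have hreal : B ≤ (A + (ρ ^ k)⁻¹ * t) ^ m * (ρ ^ d * K) ^ (1 - m) :=
      (ENNReal.ofReal_le_ofReal_iff (by positivity)).mp happ
    -- the choice of ρ
    have hedm : 1 / ((d:ℝ) * (1 - m)) * (d:ℝ) * (1 - m) = 1 := by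
      field_simp
    have hρd : (ρ ^ d * K) ^ (1 - m) = B / (2 * A) ^ m := by
      have h1 : (ρ:ℝ) ^ d = X ^ (1 / ((d:ℝ) * (1 - m)) * (d:ℝ)) := by
        rw [← Real.rpow_natCast ρ d, hρdef, ← Real.rpow_mul hX.le]
      rw [h1, Real.mul_rpow (Real.rpow_nonneg hX.le _) hK.le,
        ← Real.rpow_mul hX.le, hedm, Real.rpow_one, hXdef]
      have hKm : K ^ (1 - m) ≠ 0 := (Real.rpow_pos_of_pos hK _).ne'
      field_simp
    rw [hρd] at hreal
    set u : ℝ := A + (ρ ^ k)⁻¹ * t with hudef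
    have hu0 : 0 ≤ u := by positivity
    have h2Apos : (0:ℝ) < (2 * A) ^ m := Real.rpow_pos_of_pos (by linarith) m
    have h2A : (2 * A) ^ m ≤ u ^ m := by
      have h3 : (2 * A) ^ m * B ≤ u ^ m * B := by
        have h4 := mul_le_mul_of_nonneg_right hreal h2Apos.le
        calc (2 * A) ^ m * B = B * (2 * A) ^ m := mul_comm _ _
          _ ≤ u ^ m * (B / (2 * A) ^ m) * (2 * A) ^ m := h4
          _ = u ^ m * B := by field_simp
      exact le_of_mul_le_mul_right h3 hB
    have h2u : 2 * A ≤ u := by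
      by_contra h
      push_neg at h
      exact absurd h2A (not_le.mpr (Real.rpow_lt_rpow hu0 h hm0))
    have htA : A * ρ ^ k ≤ t := by
      have h5 : A ≤ (ρ ^ k)⁻¹ * t := by rw [hudef] at h2u; linarith
      have h6 : (ρ ^ k)⁻¹ * t * ρ ^ k = t := by field_simp
      nlinarith [mul_le_mul_of_nonneg_right h5 hρk.le]
    calc ENNReal.ofReal (A * ρ ^ k) ≤ ENNReal.ofReal t := ENNReal.ofReal_le_ofReal htA
      _ = T := hTt.symm
  -- assemble
  have hke : k * (1 / ((d:ℝ) * (1 - m))) = β := by rw [hβdef, mul_one_div]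
  have hiden : C * A ^ α * B ^ ((2 - α) / m) = A * (A * ρ ^ k) := by
    have hApow : (0:ℝ) < A ^ α := Real.rpow_pos_of_pos hA _
    have hBpow : (0:ℝ) < B ^ ((2 - α) / m) := Real.rpow_pos_of_pos hB _
    have hLpos : (0:ℝ) < C * A ^ α * B ^ ((2 - α) / m) := by positivity
    have hRpos : (0:ℝ) < A * (A * ρ ^ k) := by positivity
    refine Real.log_injOn_pos (Set.mem_Ioi.mpr hLpos) (Set.mem_Ioi.mpr hRpos) ?_
    have hDpos : (0:ℝ) < (2 * A) ^ m * K ^ (1 - m) :=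
      mul_pos (Real.rpow_pos_of_pos (by linarith) _) (Real.rpow_pos_of_pos hK _)
    rw [hβα, Real.log_mul (mul_pos hC hApow).ne' (Real.rpow_pos_of_pos hB _).ne',
      Real.log_mul hC.ne' hApow.ne', Real.log_rpow hA, Real.log_rpow hB,
      Real.log_mul hA.ne' (mul_pos hA hρk).ne', Real.log_mul hA.ne' hρk.ne',
      Real.log_rpow hρ, hρdef, Real.log_rpow hX, hXdef,
      Real.log_div hB.ne' hDpos.ne',
      Real.log_mul (Real.rpow_pos_of_pos (by linarith : (0:ℝ) < 2 * A) m).ne'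
        (Real.rpow_pos_of_pos hK _).ne',
      Real.log_rpow (by linarith : (0:ℝ) < 2 * A), Real.log_rpow hK,
      Real.log_mul (two_ne_zero) hA.ne', hCdef,
      Real.log_mul (Real.rpow_pos_of_pos two_pos _).ne'
        (Real.rpow_pos_of_pos hK _).ne',
      Real.log_rpow two_pos, Real.log_rpow hK, hαβ]
    linear_combination (Real.log B - m * (Real.log 2 + Real.log A)
      - (1 - m) * Real.log K) * hke
  have hJ : (∫⁻ x, ∫⁻ y, ENNReal.ofReal (f x * ‖x - y‖ ^ k * f y))
      = ∫⁻ x, ENNReal.ofReal (f x) * ∫⁻ y, ENNReal.ofReal (‖x - y‖ ^ k * f y) := by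
    refine lintegral_congr fun x => ?_
    rw [← lintegral_const_mul' _ _ ENNReal.ofReal_ne_top]
    refine lintegral_congr fun y => ?_
    rw [mul_assoc, ENNReal.ofReal_mul (hnn x)]
  rw [hJ, hiden, ENNReal.ofReal_mul hA.le]
  have hAeq : ENNReal.ofReal A = ∫⁻ x, ENNReal.ofReal (f x) := by
    rw [hAdef]
    exact ofReal_integral_eq_lintegral_ofReal hint (Filter.Eventually.of_forall hnn)
  calc ENNReal.ofReal A * ENNReal.ofReal (A * ρ ^ k)
      = ∫⁻ x, ENNReal.ofReal (f x) * ENNReal.ofReal (A * ρ ^ k) := by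
        rw [lintegral_mul_const' _ _ ENNReal.ofReal_ne_top, ← hAeq]
    _ ≤ ∫⁻ x, ENNReal.ofReal (f x) * ∫⁻ y, ENNReal.ofReal (‖x - y‖ ^ k * f y) :=
        lintegral_mono fun x => mul_le_mul_right (key x) _
end
end

section
/- Let d ≥ 1, k > 0, χ > 0, and d/(d+k) < m < 1. Then the free energy F_χ is bounded below: there exists a constant C ∈ ℝ such that F_χ[ρ] ≥ C for every bounded probability density ρ on ℝ^d with ∫_{ℝ^d} ρ(x)^m dx < ∞ and ∬_{ℝ^d×ℝ^d} |x−y|^k ρ(x)ρ(y) dx dy < ∞. -/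
open MeasureTheory Real Set

noncomputable section

/-- A probability density on `ℝ^d`. -/
def IsProbDens {d : ℕ} (ρ : EuclideanSpace ℝ (Fin d) → ℝ) : Prop :=
  Measurable ρ ∧ (∀ x, 0 ≤ ρ x) ∧ Integrable ρ ∧ ∫ x, ρ x = 1

/-- The (nonnegative) interaction integral `∬ |x−y|^k ρ(x)ρ(y) dx dy`,
taken in the extended nonnegative reals. -/
def interEnergy (d : ℕ) (k : ℝ) (ρ : EuclideanSpace ℝ (Fin d) → ℝ) : ENNReal :=
  ∫⁻ x, ∫⁻ y, ENNReal.ofReal (‖x - y‖ ^ k * ρ x * ρ y)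

/-- The free energy `F_χ[ρ] = (1/(m−1)) ∫ ρ^m + (χ/(2k)) ∬ |x−y|^k ρ(x)ρ(y)`
in the homogeneous setting `U(s) = s^m/(m−1)`, `V = 0`, `W(x) = χ|x|^k/k`. -/
def freeEnergyHom (d : ℕ) (m k χ : ℝ) (ρ : EuclideanSpace ℝ (Fin d) → ℝ) : ℝ :=
  (1 / (m - 1)) * (∫ x, ρ x ^ m) + (χ / (2 * k)) * (interEnergy d k ρ).toReal

/-- Probability densities in `L¹(ℝ^d) ∩ L^m(ℝ^d)`. -/
def AdmissibleLm (d : ℕ) (m : ℝ) (ρ : EuclideanSpace ℝ (Fin d) → ℝ) : Prop :=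
  IsProbDens ρ ∧ Integrable fun x => ρ x ^ m


lemma aux_final {b c m : ℝ} (hb : 0 < b) (hc : 0 ≤ c) (hm0 : 0 < m) (hm1 : m < 1) :
    ∃ C : ℝ, ∀ t : ℝ, 0 ≤ t → C ≤ b * t - c * (1 + t) ^ m := by
  rcases hc.eq_or_lt with rfl | hc
  · exact ⟨0, fun t ht => by simpa using mul_nonneg hb.le ht⟩
  set T : ℝ := (c / b) ^ (1 / (1 - m)) with hT
  have hcb : 0 < c / b := div_pos hc hb
  have hTpos : 0 < T := rpow_pos_of_pos hcb _
  refine ⟨-c - c * T ^ m, fun t ht => ?_⟩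
  -- (1+t)^m ≤ 1 + t^m
  have h1 : (1 + t) ^ m ≤ 1 + t ^ m := by
    have := NNReal.rpow_add_le_add_rpow (1 : NNReal) (⟨t, ht⟩ : NNReal) hm0.le hm1.le
    have h2 : ((1 : NNReal) + ⟨t, ht⟩ : NNReal) = (⟨1 + t, by positivity⟩ : NNReal) := by
      ext; rfl
    rw [h2, NNReal.one_rpow] at this
    have := NNReal.coe_le_coe.mpr this
    exact this
  -- c * t^m ≤ c * T^m + b * t
  have h2 : c * t ^ m ≤ c * T ^ m + b * t := by
    rcases le_total t T with h | h
    · have : t ^ m ≤ T ^ m := rpow_le_rpow ht h hm0.le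
      nlinarith [mul_nonneg hb.le ht, mul_le_mul_of_nonneg_left this hc.le]
    · have htpos : 0 < t := lt_of_lt_of_le hTpos h
      have hsplit : t ^ m = t * t ^ (m - 1) := by
        rw [show m = 1 + (m - 1) by ring, Real.rpow_add htpos, Real.rpow_one]
        ring_nf
      have hmono : t ^ (m - 1) ≤ T ^ (m - 1) :=
        Real.rpow_le_rpow_of_nonpos hTpos h (by linarith)
      have hTval : T ^ (m - 1) = b / c := by
        rw [hT, ← Real.rpow_mul hcb.le]
        have : 1 / (1 - m) * (m - 1) = -1 := by
          have h1m : 1 - m ≠ 0 := by linarith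
          field_simp
          ring
        rw [this, Real.rpow_neg_one, ← one_div, one_div_div]
      have : c * t ^ m ≤ b * t := by
        rw [hsplit]
        calc c * (t * t ^ (m - 1)) ≤ c * (t * (b / c)) := by
              rw [← hTval]
              exact mul_le_mul_of_nonneg_left
                (mul_le_mul_of_nonneg_left hmono htpos.le) hc.le
          _ = b * t := by field_simp
      have hTm : 0 ≤ c * T ^ m := mul_nonneg hc.le (rpow_pos_of_pos hTpos m).le
      linarith
  have hgoal : c * (1 + t) ^ m ≤ c + c * T ^ m + b * t := by
    calc c * (1 + t) ^ m ≤ c * (1 + t ^ m) := mul_le_mul_of_nonneg_left h1 hc.le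
      _ = c + c * t ^ m := by ring
      _ ≤ c + (c * T ^ m + b * t) := by linarith
      _ = c + c * T ^ m + b * t := by ring
  linarith

/-- pointwise comparison: `(1+r^k)^(-s) ≤ 2^(k s) (1+r)^(-(k s))` for `r ≥ 0`. -/
lemma aux_ptwise {k s r : ℝ} (hk : 0 < k) (hs : 0 < s) (hr : 0 ≤ r) :
    (1 + r ^ k) ^ (-s) ≤ 2 ^ (k * s) * (1 + r) ^ (-(k * s)) := by
  have h1 : (0:ℝ) < 1 + r ^ k := by positivity
  have h2 : (0:ℝ) < 1 + r := by positivity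
  -- key : (1+r)^k ≤ 2^k * (1+r^k)
  have key : (1 + r) ^ k ≤ 2 ^ k * (1 + r ^ k) := by
    have hmax : (1 + r) ^ k ≤ (2 * max 1 r) ^ k := by
      apply rpow_le_rpow h2.le _ hk.le
      rcases le_total r 1 with h | h
      · simp [max_eq_left h]; linarith
      · simp [max_eq_right h]; linarith
    have hmax2 : (2 * max 1 r) ^ k = 2 ^ k * (max 1 r) ^ k := by
      rw [Real.mul_rpow (by norm_num) (le_max_of_le_left zero_le_one)]
    have hmax3 : (max 1 r) ^ k ≤ 1 + r ^ k := by
      rcases le_total r 1 with h | h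
      · rw [max_eq_left h, Real.one_rpow]
        nlinarith [Real.rpow_nonneg hr k]
      · rw [max_eq_right h]; nlinarith [Real.rpow_nonneg hr k]
    calc (1 + r) ^ k ≤ 2 ^ k * (max 1 r) ^ k := by rw [← hmax2]; exact hmax
      _ ≤ 2 ^ k * (1 + r ^ k) := by
          exact mul_le_mul_of_nonneg_left hmax3 (rpow_pos_of_pos two_pos k).le
  -- raise to power s
  have key2 : (1 + r) ^ (k * s) ≤ 2 ^ (k * s) * (1 + r ^ k) ^ s := by
    have := rpow_le_rpow (rpow_pos_of_pos h2 k).le key hs.le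
    rwa [← Real.rpow_mul h2.le, Real.mul_rpow (rpow_pos_of_pos two_pos k).le h1.le,
      ← Real.rpow_mul (by norm_num : (0:ℝ) ≤ 2)] at this
  rw [Real.rpow_neg h1.le, Real.rpow_neg h2.le]
  rw [inv_le_iff_one_le_mul₀' (rpow_pos_of_pos h1 s)]
  calc (1:ℝ) = ((1+r)^(k*s)) * ((1+r)^(k*s))⁻¹ := by
        rw [mul_inv_cancel₀ (rpow_pos_of_pos h2 (k*s)).ne']
    _ ≤ (2 ^ (k * s) * (1 + r ^ k) ^ s) * ((1+r)^(k*s))⁻¹ := by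
        exact mul_le_mul_of_nonneg_right key2 (by positivity)
    _ = (1 + r ^ k) ^ s * (2 ^ (k * s) * ((1 + r) ^ (k * s))⁻¹) := by ring

lemma aux_weight_int {d : ℕ} {k s : ℝ} (hk : 0 < k) (hs : 0 < s)
    (hds : (d : ℝ) < k * s) :
    Integrable (fun z : EuclideanSpace ℝ (Fin d) => (1 + ‖z‖ ^ k) ^ (-s)) := by
  have hfr : (Module.finrank ℝ (EuclideanSpace ℝ (Fin d)) : ℝ) < k * s := by
    simpa [finrank_euclideanSpace_fin] using hds
  have hint := (integrable_one_add_norm (μ := (volume : Measure (EuclideanSpace ℝ (Fin d)))) hfr).const_mul ((2:ℝ) ^ (k*s))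
  refine hint.mono' ?_ ?_
  · apply Measurable.aestronglyMeasurable; fun_prop
  · filter_upwards with z
    have h1 : (0:ℝ) < 1 + ‖z‖ ^ k := by positivity
    rw [Real.norm_eq_abs, abs_of_nonneg (rpow_pos_of_pos h1 (-s)).le]
    exact aux_ptwise hk hs (norm_nonneg z)


abbrev Euc (d : ℕ) := EuclideanSpace ℝ (Fin d)

lemma aux_key {d : ℕ} {k m : ℝ} (hk : 0 < k) (hm0 : 0 < m) (hm1 : m < 1)
    (ρ : EuclideanSpace ℝ (Fin d) → ℝ) (hmeas : Measurable ρ) (hpos : ∀ x, 0 ≤ ρ x)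
    (hint : Integrable ρ) (hone : ∫ x, ρ x = 1) :
    (∫⁻ x, ENNReal.ofReal (ρ x ^ m)) ≤
      (∫⁻ z : EuclideanSpace ℝ (Fin d), ENNReal.ofReal ((1 + ‖z‖ ^ k) ^ (-(m / (1 - m))))) ^ (1 - m)
        * (1 + interEnergy d k ρ) ^ m := by
  set s : ℝ := m / (1 - m) with hs_def
  set f : Euc d → ENNReal := fun x => ENNReal.ofReal (ρ x) with hf_def
  set A : ENNReal := ∫⁻ z : Euc d, ENNReal.ofReal ((1 + ‖z‖ ^ k) ^ (-s)) with hA_def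
  set M : ENNReal := ∫⁻ x : Euc d, ENNReal.ofReal (ρ x ^ m) with hM_def
  have h1m : (0:ℝ) < 1 - m := by linarith
  have hfm : Measurable f := ENNReal.measurable_ofReal.comp hmeas
  have hf1 : (∫⁻ x, f x) = 1 := by
    rw [hf_def, ← ofReal_integral_eq_lintegral_ofReal hint (ae_of_all _ hpos), hone,
      ENNReal.ofReal_one]
  have hconj : Real.HolderConjugate (1 / m) (1 / (1 - m)) := by
    refine Real.holderConjugate_iff.mpr ⟨?_, ?_⟩
    · rw [lt_div_iff₀ hm0]; linarith
    · rw [one_div, one_div, inv_inv, inv_inv]; ring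
  -- the weight, jointly measurable
  have hwm : Measurable fun p : Euc d × Euc d => ENNReal.ofReal (‖p.1 - p.2‖ ^ k) := by fun_prop
  set J : Euc d → ENNReal := fun y => ∫⁻ x, f x * ENNReal.ofReal (‖x - y‖ ^ k) with hJ_def
  have hJm : Measurable J := by
    apply Measurable.lintegral_prod_right' (f := fun p : Euc d × Euc d => f p.2 * ENNReal.ofReal (‖p.2 - p.1‖ ^ k))
    fun_prop
  -- Step 1 : for every y, M ≤ (1 + J y)^m * A^(1-m)
  have step1 : ∀ y : Euc d, M ≤ (1 + J y) ^ m * A ^ (1 - m) := by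
    intro y
    set w : Euc d → ENNReal := fun x => ENNReal.ofReal (‖x - y‖ ^ k) with hw_def
    have hw : Measurable w := by fun_prop
    have hwt : ∀ x, (1 : ENNReal) + w x ≠ ⊤ := fun x => by
      simp [hw_def]
    have hid : ∀ x : Euc d, ENNReal.ofReal (ρ x ^ m)
        = ((f x * (1 + w x)) ^ m) * ((1 + w x) ^ (-m)) := by
      intro x
      have hb0 : ((1:ENNReal) + w x) ^ m ≠ 0 :=
        (ENNReal.rpow_pos (by simp) (hwt x)).ne'
      have hbt : ((1:ENNReal) + w x) ^ m ≠ ⊤ :=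
        ENNReal.rpow_ne_top_of_nonneg hm0.le (hwt x)
      rw [ENNReal.mul_rpow_of_nonneg _ _ hm0.le, mul_assoc, ENNReal.rpow_neg,
        ENNReal.mul_inv_cancel hb0 hbt, mul_one,
        ENNReal.ofReal_rpow_of_nonneg (hpos x) hm0.le]
    have hF : AEMeasurable (fun x => (f x * (1 + w x)) ^ m) volume := by fun_prop
    have hG : AEMeasurable (fun x => ((1:ENNReal) + w x) ^ (-m)) volume := by fun_prop
    have hold := ENNReal.lintegral_mul_le_Lp_mul_Lq volume hconj hF hG
    have e1 : (∫⁻ x, ((f x * (1 + w x)) ^ m) ^ (1/m)) = 1 + J y := by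
      have : ∀ x : Euc d, ((f x * (1 + w x)) ^ m) ^ (1/m) = f x + f x * w x := by
        intro x
        rw [← ENNReal.rpow_mul, mul_one_div_cancel hm0.ne', ENNReal.rpow_one, mul_add, mul_one]
      rw [lintegral_congr this, lintegral_add_left hfm, hf1]
    have e2 : (∫⁻ x, (((1:ENNReal) + w x) ^ (-m)) ^ (1/(1-m))) = A := by
      have : ∀ x : Euc d, (((1:ENNReal) + w x) ^ (-m)) ^ (1/(1-m))
          = ENNReal.ofReal ((1 + ‖x - y‖ ^ k) ^ (-s)) := by
        intro x
        rw [← ENNReal.rpow_mul]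
        have hexp : -m * (1/(1-m)) = -s := by rw [hs_def]; field_simp
        rw [hexp, hw_def]
        have hnn : (0:ℝ) ≤ ‖x - y‖ ^ k := rpow_nonneg (norm_nonneg _) k
        rw [show (1:ENNReal) + ENNReal.ofReal (‖x - y‖ ^ k)
            = ENNReal.ofReal (1 + ‖x - y‖ ^ k) by
          rw [ENNReal.ofReal_add zero_le_one hnn, ENNReal.ofReal_one]]
        rw [← ENNReal.ofReal_rpow_of_pos (by positivity)]
      rw [lintegral_congr this, hA_def]
      exact lintegral_sub_right_eq_self
        (fun z : Euc d => ENNReal.ofReal ((1 + ‖z‖ ^ k) ^ (-s))) y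
    calc M = ∫⁻ x, ((f x * (1 + w x)) ^ m) * ((1 + w x) ^ (-m)) := by
          rw [hM_def]; exact lintegral_congr hid
      _ ≤ (∫⁻ x, ((f x * (1 + w x)) ^ m) ^ (1/m)) ^ (1/(1/m))
          * (∫⁻ x, (((1:ENNReal) + w x) ^ (-m)) ^ (1/(1-m))) ^ (1/(1/(1-m))) := hold
      _ = (1 + J y) ^ m * A ^ (1 - m) := by
          rw [e1, e2, one_div_one_div, one_div_one_div]
  -- Step 2 : the double integral identity
  have hJI : (∫⁻ y, f y * J y) = interEnergy d k ρ := by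
    have h1 : ∀ y : Euc d, f y * J y
        = ∫⁻ x, f y * (f x * ENNReal.ofReal (‖x - y‖ ^ k)) := fun y =>
      (lintegral_const_mul (f y)
        (by fun_prop : Measurable fun x : Euc d => f x * ENNReal.ofReal (‖x - y‖ ^ k))).symm
    rw [lintegral_congr h1,
      lintegral_lintegral_swap (by fun_prop)]
    unfold interEnergy
    apply lintegral_congr; intro x
    apply lintegral_congr; intro y
    have hnn : (0:ℝ) ≤ ‖x - y‖ ^ k := rpow_nonneg (norm_nonneg _) k
    rw [ENNReal.ofReal_mul (mul_nonneg hnn (hpos x)), ENNReal.ofReal_mul hnn]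
    ring
  have hfJ : (∫⁻ y, f y * (1 + J y)) = 1 + interEnergy d k ρ := by
    have h1 : ∀ y : Euc d, f y * (1 + J y) = f y + f y * J y := fun y => by
      rw [mul_add, mul_one]
    rw [lintegral_congr h1, lintegral_add_left hfm, hf1, hJI]
  -- Step 3 : second Hölder
  have hF2 : AEMeasurable (fun y => (f y * (1 + J y)) ^ m) volume := by fun_prop
  have hG2 : AEMeasurable (fun y => (f y) ^ (1 - m)) volume := by fun_prop
  have hold2 := ENNReal.lintegral_mul_le_Lp_mul_Lq volume hconj hF2 hG2
  have id2 : ∀ y : Euc d, ((f y * (1 + J y)) ^ m) * ((f y) ^ (1 - m))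
      = f y * (1 + J y) ^ m := by
    intro y
    rw [ENNReal.mul_rpow_of_nonneg _ _ hm0.le, mul_assoc, mul_comm ((1 + J y) ^ m),
      ← mul_assoc, ← ENNReal.rpow_add_of_nonneg m (1 - m) hm0.le h1m.le]
    norm_num
  have e3 : (∫⁻ y, ((f y * (1 + J y)) ^ m) ^ (1/m)) = 1 + interEnergy d k ρ := by
    have h1 : ∀ y : Euc d, ((f y * (1 + J y)) ^ m) ^ (1/m) = f y * (1 + J y) := fun y => by
      rw [← ENNReal.rpow_mul, mul_one_div_cancel hm0.ne', ENNReal.rpow_one]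
    rw [lintegral_congr h1, hfJ]
  have e4 : (∫⁻ y, ((f y) ^ (1 - m)) ^ (1/(1-m))) = 1 := by
    have h1 : ∀ y : Euc d, ((f y) ^ (1 - m)) ^ (1/(1-m)) = f y := fun y => by
      rw [← ENNReal.rpow_mul, mul_one_div_cancel h1m.ne', ENNReal.rpow_one]
    rw [lintegral_congr h1, hf1]
  have step2 : (∫⁻ y, f y * (1 + J y) ^ m) ≤ (1 + interEnergy d k ρ) ^ m := by
    calc (∫⁻ y, f y * (1 + J y) ^ m)
        = ∫⁻ y, ((f y * (1 + J y)) ^ m) * ((f y) ^ (1 - m)) :=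
          (lintegral_congr id2).symm
      _ ≤ (∫⁻ y, ((f y * (1 + J y)) ^ m) ^ (1/m)) ^ (1/(1/m))
          * (∫⁻ y, ((f y) ^ (1 - m)) ^ (1/(1-m))) ^ (1/(1/(1-m))) := hold2
      _ = (1 + interEnergy d k ρ) ^ m := by
          rw [e3, e4, one_div_one_div, one_div_one_div, ENNReal.one_rpow, mul_one]
  -- Conclude
  calc M = M * ∫⁻ y, f y := by rw [hf1, mul_one]
    _ = ∫⁻ y, M * f y := (lintegral_const_mul M hfm).symm
    _ ≤ ∫⁻ y, ((1 + J y) ^ m * A ^ (1 - m)) * f y := by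
        exact lintegral_mono fun y => mul_le_mul_left (step1 y) (f y)
    _ = ∫⁻ y, A ^ (1 - m) * (f y * (1 + J y) ^ m) := by
        apply lintegral_congr; intro y; ring
    _ = A ^ (1 - m) * ∫⁻ y, f y * (1 + J y) ^ m := by
        apply lintegral_const_mul; fun_prop
    _ ≤ A ^ (1 - m) * (1 + interEnergy d k ρ) ^ m := mul_le_mul_right step2 _

/-- Fast diffusion, diffusion-dominated regime. For `d ≥ 1`,
`k > 0`, `χ > 0` and `d/(d+k) < m < 1`, the free energy `F_χ` is bounded below
on bounded probability densities with `∫ ρ^m < ∞` and finite interaction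
integral. -/
theorem bounded_below_fast_diffusion_dominated
    (d : ℕ) (hd : 1 ≤ d) (k χ m : ℝ) (hk : 0 < k) (hχ : 0 < χ)
    (hm_lb : (d : ℝ) / (d + k) < m) (hm_ub : m < 1) :
    ∃ C : ℝ, ∀ ρ : EuclideanSpace ℝ (Fin d) → ℝ,
      IsProbDens ρ → (∃ B : ℝ, ∀ x, ρ x ≤ B) →
      Integrable (fun x => ρ x ^ m) → interEnergy d k ρ ≠ ⊤ →
      C ≤ freeEnergyHom d m k χ ρ := by
  have hdk : (0:ℝ) < d + k := by positivity
  have hd1 : (1:ℝ) ≤ (d:ℝ) := by exact_mod_cast hd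
  have hm0 : 0 < m := lt_trans (div_pos (by linarith) hdk) hm_lb
  have h1m : (0:ℝ) < 1 - m := by linarith
  set s : ℝ := m / (1 - m) with hs_def
  have hs : 0 < s := div_pos hm0 h1m
  have hds : (d : ℝ) < k * s := by
    rw [hs_def, mul_div_assoc' k m (1-m), lt_div_iff₀ h1m]
    have := (div_lt_iff₀ hdk).mp hm_lb
    nlinarith
  set A : ENNReal := ∫⁻ z : EuclideanSpace ℝ (Fin d),
      ENNReal.ofReal ((1 + ‖z‖ ^ k) ^ (-s)) with hA_def
  have hAfin : A ≠ ⊤ := by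
    have hintw := aux_weight_int hk hs hds
    rw [hA_def, ← ofReal_integral_eq_lintegral_ofReal hintw
      (ae_of_all _ fun z => (rpow_pos_of_pos (by positivity) _).le)]
    exact ENNReal.ofReal_ne_top
  set A' : ℝ := A.toReal with hA'_def
  have hA'0 : 0 ≤ A' := ENNReal.toReal_nonneg
  have hb : 0 < χ / (2 * k) := by positivity
  have hc : 0 ≤ A' ^ (1 - m) / (1 - m) := by positivity
  obtain ⟨C, hC⟩ := aux_final hb hc hm0 hm_ub
  refine ⟨C, fun ρ hρ _ hintm hIfin => ?_⟩
  obtain ⟨hmeas, hpos, hint, hone⟩ := hρ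
  set I : ENNReal := interEnergy d k ρ with hI_def
  set t : ℝ := I.toReal with ht_def
  have ht : 0 ≤ t := ENNReal.toReal_nonneg
  -- bound on ∫ ρ^m
  have hkey := aux_key hk hm0 hm_ub ρ hmeas hpos hint hone
  have hMof : ENNReal.ofReal (∫ x, ρ x ^ m) = ∫⁻ x, ENNReal.ofReal (ρ x ^ m) :=
    ofReal_integral_eq_lintegral_ofReal hintm
      (ae_of_all _ fun x => rpow_nonneg (hpos x) m)
  have hRfin : A ^ (1 - m) * (1 + I) ^ m ≠ ⊤ := by
    apply ENNReal.mul_ne_top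
    · exact ENNReal.rpow_ne_top_of_nonneg h1m.le hAfin
    · exact ENNReal.rpow_ne_top_of_nonneg hm0.le (by simp [hIfin])
  have hbound : (∫ x, ρ x ^ m) ≤ A' ^ (1 - m) * (1 + t) ^ m := by
    have h1 : ENNReal.ofReal (∫ x, ρ x ^ m) ≤ A ^ (1 - m) * (1 + I) ^ m := by
      rw [hMof]; exact hkey
    have h2 := (ENNReal.ofReal_le_iff_le_toReal hRfin).mp h1
    have h3 : (A ^ (1 - m) * (1 + I) ^ m).toReal = A' ^ (1 - m) * (1 + t) ^ m := by
      rw [ENNReal.toReal_mul, ← ENNReal.toReal_rpow, ← ENNReal.toReal_rpow,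
        ENNReal.toReal_add ENNReal.one_ne_top hIfin, ENNReal.toReal_one]
    rwa [h3] at h2
  -- finish
  have hneg : (1 / (m - 1)) < 0 := by
    apply div_neg_of_pos_of_neg one_pos; linarith
  have hmul : (1 / (m - 1)) * (A' ^ (1 - m) * (1 + t) ^ m)
      ≤ (1 / (m - 1)) * (∫ x, ρ x ^ m) :=
    mul_le_mul_of_nonpos_left hbound hneg.le
  have hstep : C ≤ χ / (2 * k) * t - (A' ^ (1 - m) / (1 - m)) * (1 + t) ^ m := hC t ht
  have hrw : (1 / (m - 1)) * (A' ^ (1 - m) * (1 + t) ^ m)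
      = -((A' ^ (1 - m) / (1 - m)) * (1 + t) ^ m) := by
    have hne : m - 1 ≠ 0 := by linarith
    field_simp
    ring
  unfold freeEnergyHom
  rw [← hI_def, ← ht_def]
  calc C ≤ χ / (2 * k) * t - (A' ^ (1 - m) / (1 - m)) * (1 + t) ^ m := hstep
    _ = (1 / (m - 1)) * (A' ^ (1 - m) * (1 + t) ^ m) + χ / (2 * k) * t := by
        rw [hrw]; ring
    _ ≤ (1 / (m - 1)) * (∫ x, ρ x ^ m) + χ / (2 * k) * t := by linarith
end
end

section
/- Consider the one-dimensional semi-discrete finite-volume scheme on a grid of N ≥ 2 cells with mesh size Δx > 0 and no-flux boundary conditions: given H : [0,∞) → ℝ convex and C¹, values V_i ∈ ℝ (i = 1,…,N), and symmetric interaction weights W_j = W_{−j} ∈ ℝ (|j| ≤ N−1), define ξ_i = H′(ρ_i) + V_i + Δx Σ_{k=1}^{N} W_{i−k} ρ_k, velocities u_{i+1/2} = −(ξ_{i+1} − ξ_i)/Δx for i = 1,…,N−1, upwind fluxes F_{i+1/2} = ρ_i (u_{i+1/2})⁺ + ρ_{i+1} (u_{i+1/2})⁻ for i = 1,…,N−1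 and F_{1/2} = F_{N+1/2} = 0, where (s)⁺ = max{0,s} and (s)⁻ = min{0,s}, and the ODE system dρ_i/dt = −(F_{i+1/2} − F_{i−1/2})/Δx. If t ↦ (ρ_i(t))_{i=1}^N is a C¹ solution on [0,T] with ρ_i(0) ≥ 0 for all i, then ρ_i(t) ≥ 0 for all i and all t ∈ [0,T], and the discrete mass Δx Σ_{i=1}^{N} ρ_i(t) is constant in time. -/
open Real Set Filter Topology

noncomputable section

/-- Discrete potential `ξ_i = H′(ρ_i) + V_i + Δx Σ_{k<N} W_{i−k} ρ_k`
(cells are indexed by `i = 0, …, N−1`). -/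
def xiSD (N : ℕ) (Δx : ℝ) (H' : ℝ → ℝ) (V : ℕ → ℝ) (W : ℤ → ℝ)
    (ρ : ℕ → ℝ) (i : ℕ) : ℝ :=
  H' (ρ i) + V i + Δx * ∑ k ∈ Finset.range N, W ((i : ℤ) - (k : ℤ)) * ρ k

/-- Discrete velocity at the edge `e` between cells `e−1` and `e`
(for `1 ≤ e ≤ N−1`): `u_{e−1/2+1} = −(ξ_e − ξ_{e−1})/Δx`. -/
def velSD (N : ℕ) (Δx : ℝ) (H' : ℝ → ℝ) (V : ℕ → ℝ) (W : ℤ → ℝ)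
    (ρ : ℕ → ℝ) (e : ℕ) : ℝ :=
  -(xiSD N Δx H' V W ρ e - xiSD N Δx H' V W ρ (e - 1)) / Δx

/-- Upwind flux at edge `e`; the no-flux boundary conditions impose
`F_0 = F_N = 0`, and at interior edges
`F_e = ρ_{e−1} (u_e)⁺ + ρ_e (u_e)⁻` with `(s)⁺ = max{s,0}`, `(s)⁻ = min{s,0}`. -/
def fluxSD (N : ℕ) (Δx : ℝ) (H' : ℝ → ℝ) (V : ℕ → ℝ) (W : ℤ → ℝ)
    (ρ : ℕ → ℝ) (e : ℕ) : ℝ :=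
  if e = 0 ∨ N ≤ e then 0
  else ρ (e - 1) * max (velSD N Δx H' V W ρ e) 0
        + ρ e * min (velSD N Δx H' V W ρ e) 0

/-- Abel-type summation identity. -/
lemma abel_shift (N : ℕ) (hN : 1 ≤ N) (χ F : ℕ → ℝ) (hF0 : F 0 = 0) (hFN : F N = 0) :
    ∑ i ∈ Finset.range N, χ i * (F i - F (i + 1))
      = ∑ e ∈ Finset.range N, (χ e - χ (e - 1)) * F e := by
  obtain ⟨n, rfl⟩ : ∃ n, N = n + 1 := ⟨N - 1, (Nat.succ_pred_eq_of_pos hN).symm⟩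
  have h1 : ∑ i ∈ Finset.range (n + 1), χ i * F (i + 1)
      = ∑ e ∈ Finset.range (n + 1), χ (e - 1) * F e := by
    rw [Finset.sum_range_succ, Finset.sum_range_succ' (fun e => χ (e - 1) * F e) n]
    simp [hFN, hF0]
  simp only [mul_sub, sub_mul, Finset.sum_sub_distrib, h1]

/-- Key sign lemma: sum of discrete divergence of the upwind flux over a
"nonpositive" index set is nonnegative. -/
lemma key_sum_nonneg (N : ℕ) (hN : 1 ≤ N) (Δx : ℝ) (H' : ℝ → ℝ) (V : ℕ → ℝ) (W : ℤ → ℝ)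
    (η : ℕ → ℝ) (K : Finset ℕ) (hK : K ⊆ Finset.range N)
    (hneg : ∀ i ∈ K, η i ≤ 0) (hpos : ∀ i, i < N → i ∉ K → 0 ≤ η i) :
    0 ≤ ∑ i ∈ K, (fluxSD N Δx H' V W η i - fluxSD N Δx H' V W η (i + 1)) := by
  set F : ℕ → ℝ := fun e => fluxSD N Δx H' V W η e with hF
  set χ : ℕ → ℝ := fun i => if i ∈ K then 1 else 0 with hχ
  have hsum : ∑ i ∈ Finset.range N, χ i * (F i - F (i + 1))
      = ∑ i ∈ K, (F i - F (i + 1)) := by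
    calc ∑ i ∈ Finset.range N, χ i * (F i - F (i + 1))
        = ∑ i ∈ Finset.range N, (if i ∈ K then (F i - F (i + 1)) else 0) :=
          Finset.sum_congr rfl (fun i _ => by by_cases h : i ∈ K <;> simp [hχ, h])
      _ = ∑ i ∈ Finset.range N ∩ K, (F i - F (i + 1)) := Finset.sum_ite_mem _ _ _
      _ = ∑ i ∈ K, (F i - F (i + 1)) := by rw [Finset.inter_eq_right.2 hK]
  rw [← hsum, abel_shift N hN χ F (by simp [hF, fluxSD]) (by simp [hF, fluxSD])]
  apply Finset.sum_nonneg
  intro e he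
  rcases Nat.eq_zero_or_pos e with rfl | hepos
  · simp [hF, fluxSD]
  have heN : e < N := Finset.mem_range.mp he
  have hFe : F e = η (e - 1) * max (velSD N Δx H' V W η e) 0
      + η e * min (velSD N Δx H' V W η e) 0 := by
    have hne : e ≠ 0 := Nat.pos_iff_ne_zero.mp hepos
    simp [hF, fluxSD, hne, not_le.mpr heN]
  have hmax : (0:ℝ) ≤ max (velSD N Δx H' V W η e) 0 := le_max_right _ _
  have hmin : min (velSD N Δx H' V W η e) 0 ≤ 0 := min_le_right _ _
  have he1N : e - 1 < N := lt_of_le_of_lt (Nat.sub_le e 1) heN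
  by_cases h1 : e ∈ K <;> by_cases h2 : e - 1 ∈ K
  · simp [hχ, h1, h2]
  · -- e ∈ K, e-1 ∉ K : coefficient 1, flux ≥ 0
    have hη1 : 0 ≤ η (e - 1) := hpos _ he1N h2
    have hη2 : η e ≤ 0 := hneg _ h1
    have : 0 ≤ F e := by
      rw [hFe]
      have := mul_nonneg hη1 hmax
      nlinarith
    simp only [hχ, h1, h2, if_true, if_false]
    linarith
  · -- e ∉ K, e-1 ∈ K : coefficient -1, flux ≤ 0
    have hη1 : η (e - 1) ≤ 0 := hneg _ h2
    have hη2 : 0 ≤ η e := hpos _ heN h1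
    have : F e ≤ 0 := by
      rw [hFe]
      nlinarith
    simp only [hχ, h1, h2, if_true, if_false]
    linarith
  · simp [hχ, h1, h2]

/-- Conservation of mass and non-negativity for the semi-discrete
finite-volume scheme
`dρ_i/dt = −(F_{i+1/2} − F_{i−1/2})/Δx` with no-flux boundary conditions:
a `C¹` solution on `[0,T]` with nonnegative initial data stays nonnegative and
has constant discrete mass `Δx Σ_i ρ_i(t)`. -/
theorem semidiscrete_mass_nonneg
    (N : ℕ) (hN : 2 ≤ N) (Δx T : ℝ) (hΔx : 0 < Δx) (hT : 0 < T)
    (H H' : ℝ → ℝ) (hHconv : ConvexOn ℝ (Ici 0) H)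
    (hH' : ∀ s ∈ Ici (0 : ℝ), HasDerivWithinAt H (H' s) (Ici 0) s)
    (hH'cont : ContinuousOn H' (Ici 0))
    (V : ℕ → ℝ) (W : ℤ → ℝ) (hWsymm : ∀ j : ℤ, W (-j) = W j)
    (ρ : ℝ → ℕ → ℝ)
    (hC1 : ∀ i < N, ContDiffOn ℝ 1 (fun t => ρ t i) (Icc 0 T))
    (hODE : ∀ t ∈ Icc (0 : ℝ) T, ∀ i < N,
      HasDerivWithinAt (fun s => ρ s i)
        (-(fluxSD N Δx H' V W (ρ t) (i + 1) - fluxSD N Δx H' V W (ρ t) i) / Δx)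
        (Icc 0 T) t)
    (h0 : ∀ i < N, 0 ≤ ρ 0 i) :
    ∀ t ∈ Icc (0 : ℝ) T,
      (∀ i < N, 0 ≤ ρ t i) ∧
      Δx * ∑ i ∈ Finset.range N, ρ t i = Δx * ∑ i ∈ Finset.range N, ρ 0 i := by
  have hN1 : 1 ≤ N := le_trans (by norm_num) hN
  set F : ℝ → ℕ → ℝ := fun s e => fluxSD N Δx H' V W (ρ s) e with hFdef
  set g : ℝ → ℕ → ℝ := fun s i => -(F s (i + 1) - F s i) / Δx with hgdef
  -- the filter inclusion
  have hfilter : ∀ x ∈ Ico (0 : ℝ) T, 𝓝[>] x ≤ 𝓝[Icc 0 T \ {x}] x := by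
    intro x hx
    rw [← nhdsWithin_Ioo_eq_nhdsGT hx.2]
    exact nhdsWithin_mono _ (fun z hz =>
      ⟨⟨le_trans hx.1 hz.1.le, hz.2.le⟩, ne_of_gt hz.1⟩)
  -- mass conservation
  have hmass : ∀ t ∈ Icc (0 : ℝ) T, ∑ i ∈ Finset.range N, ρ t i
      = ∑ i ∈ Finset.range N, ρ 0 i := by
    have hcont : ContinuousOn (fun s => ∑ i ∈ Finset.range N, ρ s i) (Icc 0 T) :=
      continuousOn_finset_sum _ (fun i hi => (hC1 i (Finset.mem_range.mp hi)).continuousOn)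
    refine constant_of_has_deriv_right_zero hcont (fun x hx => ?_)
    have hx' : x ∈ Icc (0 : ℝ) T := ⟨hx.1, hx.2.le⟩
    have hsum : HasDerivWithinAt (fun s => ∑ i ∈ Finset.range N, ρ s i)
        (∑ i ∈ Finset.range N, g x i) (Icc 0 T) x :=
      HasDerivWithinAt.fun_sum (fun i hi => hODE x hx' i (Finset.mem_range.mp hi))
    have hzero : ∑ i ∈ Finset.range N, g x i = 0 := by
      have : ∀ i, g x i = (F x i - F x (i + 1)) / Δx := by
        intro i; simp only [hgdef, neg_sub]
      rw [Finset.sum_congr rfl (fun i _ => this i), ← Finset.sum_div,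
        Finset.sum_range_sub' (fun e => F x e)]
      have h1 : F x 0 = 0 := by simp [hFdef, fluxSD]
      have h2 : F x N = 0 := by simp [hFdef, fluxSD]
      rw [h1, h2]; simp
    rw [hzero] at hsum
    exact hsum.mono_of_mem_nhdsWithin (Icc_mem_nhdsGE_of_mem hx)
  -- nonnegativity
  set M : ℝ → ℝ := fun s => ∑ i ∈ Finset.range N, min (ρ s i) 0 with hMdef
  have hMcont : ContinuousOn M (Icc 0 T) :=
    continuousOn_finset_sum _ (fun i hi =>
      ((continuous_id.min continuous_const).comp_continuousOn
        (hC1 i (Finset.mem_range.mp hi)).continuousOn))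
  have hM0 : M 0 = 0 := by
    refine Finset.sum_eq_zero (fun i hi => ?_)
    exact min_eq_right (h0 i (Finset.mem_range.mp hi))
  have hMnonpos : ∀ s, M s ≤ 0 :=
    fun s => Finset.sum_nonpos (fun i _ => min_le_right _ _)
  -- the Dini bound
  have hbound : ∀ x ∈ Ico (0 : ℝ) T, ∀ r : ℝ, (0 : ℝ) < r →
      ∃ᶠ z in 𝓝[>] x, slope (fun s => -M s) x z < r := by
    intro x hx r hr
    have hx' : x ∈ Icc (0 : ℝ) T := ⟨hx.1, hx.2.le⟩
    set ε : ℝ := r / (N + 1) with hε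
    have hεpos : 0 < ε := div_pos hr (by positivity)
    set I : Finset ℕ := (Finset.range N).filter (fun i => ρ x i < 0) with hI
    set Zneg : Finset ℕ :=
      (Finset.range N).filter (fun i => ρ x i = 0 ∧ g x i < 0) with hZ
    set K : Finset ℕ := I ∪ Zneg with hK
    have hKsub : K ⊆ Finset.range N := by
      rw [hK]
      exact Finset.union_subset (Finset.filter_subset _ _) (Finset.filter_subset _ _)
    have hKneg : ∀ i ∈ K, ρ x i ≤ 0 := by
      intro i hi
      rcases Finset.mem_union.mp hi with h | h
      · exact (Finset.mem_filter.mp h).2.le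
      · exact le_of_eq (Finset.mem_filter.mp h).2.1
    have hKnonneg : 0 ≤ ∑ i ∈ K, g x i := by
      have h1 : ∀ i ∈ K, g x i = (F x i - F x (i + 1)) / Δx := by
        intro i _; simp only [hgdef, neg_sub]
      rw [Finset.sum_congr rfl h1, ← Finset.sum_div]
      refine div_nonneg (key_sum_nonneg N hN1 Δx H' V W (ρ x) K hKsub hKneg ?_) hΔx.le
      intro i _ hiK
      have : i ∉ I := fun h => hiK (Finset.mem_union_left _ h)
      by_contra hcon
      exact this (Finset.mem_filter.mpr ⟨Finset.mem_range.mpr ‹i < N›, by linarith⟩)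
    set c : ℕ → ℝ := fun i =>
      if 0 < ρ x i then 0
      else if ρ x i < 0 then g x i - ε else min (g x i) 0 - ε with hc
    have hterm : ∀ i ∈ Finset.range N, (if i ∈ K then g x i else 0) - ε ≤ c i := by
      intro i hi
      by_cases hP : 0 < ρ x i
      · have hiK : i ∉ K := fun h => absurd (hKneg i h) (not_le.mpr hP)
        simp only [hc, hP, if_pos, hiK, if_neg, if_false]
        simp [hεpos.le]
      · by_cases hneg : ρ x i < 0
        · have hiK : i ∈ K := Finset.mem_union_left _
            (Finset.mem_filter.mpr ⟨hi, hneg⟩)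
          simp only [hc, hP, if_neg, hneg, if_pos, hiK, if_true, if_false]
          simp
        · have hz : ρ x i = 0 := le_antisymm (not_lt.mp hP) (not_lt.mp hneg)
          by_cases hg : g x i < 0
          · have hiK : i ∈ K := Finset.mem_union_right _
              (Finset.mem_filter.mpr ⟨hi, hz, hg⟩)
            simp only [hc, hP, hneg, hiK, if_true, if_false, if_neg, if_pos]
            rw [min_eq_left hg.le]
          · have hiK : i ∉ K := by
              intro h
              rcases Finset.mem_union.mp h with h' | h'
              · exact hneg (Finset.mem_filter.mp h').2
              · exact hg (Finset.mem_filter.mp h').2.2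
            simp only [hc, hP, hneg, hiK, if_false, if_neg]
            rw [min_eq_right (not_lt.mp hg)]
    have hcsum : -((N : ℝ) * ε) ≤ ∑ i ∈ Finset.range N, c i := by
      have h2 : ∑ i ∈ Finset.range N, ((if i ∈ K then g x i else 0) - ε)
          ≤ ∑ i ∈ Finset.range N, c i := Finset.sum_le_sum hterm
      have h3 : ∑ i ∈ Finset.range N, ((if i ∈ K then g x i else 0) - ε)
          = ∑ i ∈ K, g x i - N * ε := by
        rw [Finset.sum_sub_distrib, Finset.sum_ite_mem,
          Finset.inter_eq_right.2 hKsub]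
        simp [mul_comm]
      rw [h3] at h2
      linarith
    -- per-index eventual slope bounds
    have hslope : ∀ i, i < N → ∀ᶠ z in 𝓝[>] x,
        g x i - ε < slope (fun s => ρ s i) x z := by
      intro i hi
      have hd : HasDerivWithinAt (fun s => ρ s i) (g x i) (Icc 0 T) x :=
        hODE x hx' i hi
      rw [hasDerivWithinAt_iff_tendsto_slope] at hd
      exact (hd.mono_left (hfilter x hx)).eventually
        (eventually_gt_nhds (by linarith))
    have hcontev : ∀ i, i < N → Filter.Tendsto (fun z => ρ z i) (𝓝[>] x) (𝓝 (ρ x i)) := by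
      intro i hi
      have hco : ContinuousWithinAt (fun z => ρ z i) (Icc 0 T) x :=
        (hC1 i hi).continuousOn x hx'
      exact hco.tendsto.mono_left
        (le_trans (hfilter x hx) (nhdsWithin_mono _ diff_subset))
    have hev : ∀ i ∈ Finset.range N, ∀ᶠ z in 𝓝[>] x,
        (z - x) * c i ≤ min (ρ z i) 0 - min (ρ x i) 0 := by
      intro i hi'
      have hi : i < N := Finset.mem_range.mp hi'
      by_cases hP : 0 < ρ x i
      · filter_upwards [(hcontev i hi).eventually (eventually_gt_nhds hP)] with z hz
        rw [min_eq_right hz.le, min_eq_right hP.le]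
        simp [hc, hP]
      · by_cases hneg : ρ x i < 0
        · filter_upwards [(hcontev i hi).eventually (eventually_lt_nhds hneg),
            hslope i hi, eventually_mem_nhdsWithin] with z h1 h2 h3
          have hzx : 0 < z - x := sub_pos.2 h3
          rw [slope_def_field] at h2
          have h4 : (z - x) * (g x i - ε) < ρ z i - ρ x i := by
            have := (lt_div_iff₀ hzx).mp h2; linarith
          rw [min_eq_left h1.le, min_eq_left hneg.le]
          have : c i = g x i - ε := by simp [hc, hP, hneg]
          rw [this]
          linarith
        · have hz0 : ρ x i = 0 := le_antisymm (not_lt.mp hP) (not_lt.mp hneg)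
          filter_upwards [hslope i hi, eventually_mem_nhdsWithin] with z h2 h3
          have hzx : 0 < z - x := sub_pos.2 h3
          rw [slope_def_field] at h2
          have h4 : (z - x) * (g x i - ε) ≤ ρ z i := by
            have h2' := (lt_div_iff₀ hzx).mp h2
            rw [hz0] at h2'
            nlinarith [h2']
          have hci : c i = min (g x i) 0 - ε := by simp [hc, hP, hneg]
          have h5 : min (g x i) 0 - ε ≤ min (g x i - ε) 0 := by
            rcases le_total (g x i) 0 with h | h
            · rw [min_eq_left h, min_eq_left (by linarith)]
            · rw [min_eq_right h]
              exact le_min (by linarith) (by linarith)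
          have h6 : (z - x) * (min (g x i - ε) 0)
              = min ((z - x) * (g x i - ε)) 0 := by
            rw [mul_min_of_nonneg _ _ hzx.le, mul_zero]
          rw [hci, hz0]
          calc (z - x) * (min (g x i) 0 - ε)
              ≤ (z - x) * min (g x i - ε) 0 :=
                mul_le_mul_of_nonneg_left h5 hzx.le
            _ = min ((z - x) * (g x i - ε)) 0 := h6
            _ ≤ min (ρ z i) 0 := min_le_min h4 (le_refl 0)
            _ = min (ρ z i) 0 - min 0 0 := by simp
    have hNε : (N : ℝ) * ε < r := by
      rw [hε, ← mul_div_assoc]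
      rw [div_lt_iff₀ (by positivity : (0:ℝ) < (N:ℝ) + 1)]
      nlinarith
    have hbig : ∀ᶠ z in 𝓝[>] x,
        (∀ i ∈ Finset.range N,
          (z - x) * c i ≤ min (ρ z i) 0 - min (ρ x i) 0) ∧ z ∈ Ioi x :=
      ((Finset.eventually_all (Finset.range N)).mpr hev).and
        eventually_mem_nhdsWithin
    refine (hbig.mono ?_).frequently
    rintro z ⟨hz1, hz2⟩
    have hzx : 0 < z - x := sub_pos.2 hz2
    have hsum2 : (z - x) * ∑ i ∈ Finset.range N, c i ≤ M z - M x := by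
      rw [Finset.mul_sum, hMdef]
      rw [← Finset.sum_sub_distrib]
      exact Finset.sum_le_sum hz1
    rw [slope_def_field, div_lt_iff₀ hzx]
    have e1 : (z - x) * -((N:ℝ) * ε) ≤ (z - x) * ∑ i ∈ Finset.range N, c i :=
      mul_le_mul_of_nonneg_left hcsum hzx.le
    have e2 : (z - x) * ((N:ℝ) * ε) < (z - x) * r :=
      mul_lt_mul_of_pos_left hNε hzx
    ring_nf
    nlinarith [e1, e2, hsum2]
  have hMnonneg : ∀ t ∈ Icc (0 : ℝ) T, 0 ≤ M t := by
    intro t ht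
    have := image_le_of_liminf_slope_right_le_deriv_boundary
      (f := fun s => -M s) (a := 0) (b := T) (hMcont.neg)
      (le_refl (-M 0)) (continuousOn_const) (B' := fun _ => 0)
      (fun x _ => hasDerivWithinAt_const x _ _) hbound ht
    rw [hM0] at this
    simpa using this
  intro t ht
  refine ⟨?_, by rw [hmass t ht]⟩
  intro i hi
  have hMt : M t = 0 := le_antisymm (hMnonpos t) (hMnonneg t ht)
  have hall : ∀ j ∈ Finset.range N, min (ρ t j) 0 = 0 := by
    intro j hj
    have h1 : ∀ j ∈ Finset.range N, (0:ℝ) ≤ -min (ρ t j) 0 :=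
      fun j _ => by simpa using min_le_right (ρ t j) 0
    have h2 : ∑ j ∈ Finset.range N, -min (ρ t j) 0 = 0 := by
      have hh : (∑ j ∈ Finset.range N, -min (ρ t j) 0) = -M t := by
        simp [hMdef]
      rw [hh, hMt, neg_zero]
    have := (Finset.sum_eq_zero_iff_of_nonneg h1).mp h2 j hj
    linarith
  have := hall i (Finset.mem_range.mpr hi)
  calc (0:ℝ) = min (ρ t i) 0 := this.symm
    _ ≤ ρ t i := min_le_left _ _
end
end
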